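/- Fix a positive integer l, let a_r be the coefficient of x^r in (x²+x+1)^{l-1}(2x+1)(x+2)(x-1), and define the polynomial P_l(e,f) := Σ_{r=0}^{2l+1} a_r (e)_r (−f)_{2l+1−r}, where (a)_k is the rising factorial. Then P_l(e, e+2l−f) = −P_l(e, f) as polynomials in e and f. -/

import Mathlib

open Finset Polynomial

noncomputable section

/-- rising factorial -/
def rf {R : Type*} [CommRing R] (a : R) (k : ℕ) : R := ∏ i ∈ Finset.range k, (a + i)

/-- the polynomial `(x²+x+1)^{l-1}(2x+1)(x+2)(x-1)` -/
def APoly (l : ℕ) : Polynomial ℚ :=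
  (X ^ 2 + X + 1) ^ (l - 1) * (2 * X + 1) * (X + 2) * (X - 1)

/-- `P_l(e,f) = Σ_r a_r (e)_r (−f)_{2l+1−r}` -/
def PP (l : ℕ) {K : Type*} [Field K] (e f : K) : K :=
  ∑ r ∈ Finset.range (2 * l + 2), ((APoly l).coeff r : K) * rf e r * rf (-f) (2 * l + 1 - r)

lemma rf_zero {R : Type*} [CommRing R] (a : R) : rf a 0 = 1 := by simp [rf]

lemma rf_succ {R : Type*} [CommRing R] (a : R) (n : ℕ) :
    rf a (n + 1) = rf a n * (a + n) := by
  simp [rf, Finset.prod_range_succ]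

lemma rf_add {R : Type*} [CommRing R] (a : R) (r s : ℕ) :
    rf a (r + s) = rf a r * rf (a + r) s := by
  simp only [rf, Finset.prod_range_add]
  congr 1
  refine Finset.prod_congr rfl fun i _ => ?_
  push_cast
  ring

lemma rf_neg {R : Type*} [CommRing R] (a : R) (n : ℕ) :
    rf (-a) n = (-1) ^ n * rf (a - n + 1) n := by
  simp only [rf]
  rw [← Finset.prod_range_reflect (fun j => a - (n : R) + 1 + j) n,
      show ((-1 : R) ^ n) = ∏ _i ∈ Finset.range n, (-1 : R) by simp,
      ← Finset.prod_mul_distrib]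
  refine Finset.prod_congr rfl fun i hi => ?_
  rw [Finset.mem_range] at hi
  have : ((n - 1 - i : ℕ) : R) = (n : R) - 1 - i := by
    push_cast [Nat.cast_sub (by omega : i ≤ n - 1), Nat.cast_sub (by omega : 1 ≤ n)]
    ring
  rw [this]; ring

lemma rf_vandermonde (x y : ℚ) (N : ℕ) :
    rf (x + y) N = ∑ s ∈ Finset.range (N + 1), (N.choose s : ℚ) * rf x s * rf y (N - s) := by
  induction N with
  | zero => simp [rf_zero]
  | succ N ih =>
    rw [rf_succ, ih]
    rw [Finset.sum_range_succ' _ (N + 1)]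
    simp only [Nat.choose_succ_succ, Nat.cast_add]
    rw [Finset.sum_mul]
    have key : ∀ s ∈ Finset.range (N + 1),
        (N.choose s : ℚ) * rf x s * rf y (N - s) * (x + y + N)
          = ((N.choose s : ℚ) * rf x (s + 1) * rf y (N + 1 - (s + 1))
            + (N.choose s : ℚ) * rf x s * rf y (N + 1 - s)) := by
      intro s hs
      rw [Finset.mem_range] at hs
      have hsN : s ≤ N := Nat.lt_succ_iff.mp hs
      have h1 : N + 1 - (s + 1) = N - s := by omega
      have h2 : N + 1 - s = (N - s) + 1 := by omega
      rw [h1, h2, rf_succ, rf_succ]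
      have : ((N - s : ℕ) : ℚ) = (N : ℚ) - s := by push_cast [Nat.cast_sub hsN]; ring
      rw [this]; ring
    rw [Finset.sum_congr rfl key, Finset.sum_add_distrib]
    have hB : ∑ s ∈ Finset.range (N + 1), (N.choose s : ℚ) * rf x s * rf y (N + 1 - s)
        = (∑ s ∈ Finset.range (N + 1),
            (N.choose (s + 1) : ℚ) * rf x (s + 1) * rf y (N + 1 - (s + 1)))
          + rf x 0 * rf y (N + 1) := by
      rw [Finset.sum_range_succ' (fun s => (N.choose s : ℚ) * rf x s * rf y (N + 1 - s)) N,
        Finset.sum_range_succ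
          (fun s => (N.choose (s + 1) : ℚ) * rf x (s + 1) * rf y (N + 1 - (s + 1))) N]
      simp
    rw [hB]
    simp only [add_mul, Finset.sum_add_distrib, Nat.succ_eq_add_one]
    simp [rf_zero]
    ring

lemma APoly_natDegree_lt (l : ℕ) (hl : 0 < l) : (APoly l).natDegree < 2 * l + 2 := by
  have h1 : (X ^ 2 + X + 1 : ℚ[X]).natDegree ≤ 2 := by compute_degree
  have h2 : ((X ^ 2 + X + 1 : ℚ[X]) ^ (l - 1)).natDegree ≤ 2 * (l - 1) :=
    le_trans (natDegree_pow_le) (by nlinarith)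
  have h3 : (2 * X + 1 : ℚ[X]).natDegree ≤ 1 := by compute_degree
  have h4 : (X + 2 : ℚ[X]).natDegree ≤ 1 := by compute_degree
  have h5 : (X - 1 : ℚ[X]).natDegree ≤ 1 := by compute_degree
  have := natDegree_mul_le (p := (X ^ 2 + X + 1 : ℚ[X]) ^ (l - 1) * (2 * X + 1) * (X + 2))
    (q := (X - 1 : ℚ[X]))
  have := natDegree_mul_le (p := (X ^ 2 + X + 1 : ℚ[X]) ^ (l - 1) * (2 * X + 1))
    (q := (X + 2 : ℚ[X]))
  have := natDegree_mul_le (p := (X ^ 2 + X + 1 : ℚ[X]) ^ (l - 1)) (q := (2 * X + 1 : ℚ[X]))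
  unfold APoly
  omega

lemma key_poly (l : ℕ) (hl : 0 < l) :
    ∑ r ∈ Finset.range (2 * l + 2),
      C ((APoly l).coeff r) * (-X) ^ r * (1 + X) ^ (2 * l + 1 - r) = APoly l := by
  apply RatFunc.algebraMap_injective ℚ
  set φ := algebraMap ℚ[X] (RatFunc ℚ) with hφ
  set x : RatFunc ℚ := φ X with hxdef
  have hx1 : (1 : RatFunc ℚ) + x ≠ 0 := by
    rw [hxdef, ← map_one φ, ← map_add]
    intro h
    have h2 : (1 + X : ℚ[X]) = 0 := RatFunc.algebraMap_injective ℚ (h.trans (map_zero φ).symm)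
    simpa using congrArg (fun p => Polynomial.eval 0 p) h2
  set y : RatFunc ℚ := -x / (1 + x) with hy
  have hterm : ∀ r ∈ Finset.range (2 * l + 2),
      φ (C ((APoly l).coeff r) * (-X) ^ r * (1 + X) ^ (2 * l + 1 - r))
        = ((APoly l).coeff r • y ^ r) * (1 + x) ^ (2 * l + 1) := by
    intro r hr
    rw [Finset.mem_range] at hr
    have hr' : r ≤ 2 * l + 1 := by omega
    rw [map_mul, map_mul, map_pow, map_pow, map_neg, map_add, map_one, ← hxdef]
    have h1 : (1 + x) ^ (2 * l + 1 - r) = (1 + x) ^ (2 * l + 1) * ((1 + x) ^ r)⁻¹ :=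
      pow_sub₀ _ hx1 hr'
    have h2 : φ (C ((APoly l).coeff r)) = algebraMap ℚ (RatFunc ℚ) ((APoly l).coeff r) := by
      rw [IsScalarTower.algebraMap_apply ℚ ℚ[X] (RatFunc ℚ), Polynomial.algebraMap_eq]
    have hxr : ((1 + x) ^ r) ≠ 0 := pow_ne_zero _ hx1
    rw [h1, h2, RatFunc.smul_eq_C_mul, show (RatFunc.C : ℚ →+* RatFunc ℚ) = algebraMap ℚ (RatFunc ℚ) from Subsingleton.elim _ _, hy, div_pow, div_eq_mul_inv]
    ring
  rw [map_sum, Finset.sum_congr rfl hterm, ← Finset.sum_mul]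
  have hsum : ∑ r ∈ Finset.range (2 * l + 2), (APoly l).coeff r • y ^ r = aeval y (APoly l) :=
    by
      rw [aeval_eq_sum_range' (APoly_natDegree_lt l hl) y]
      refine Finset.sum_congr rfl fun i _ => ?_
      rw [RatFunc.smul_eq_C_mul, Algebra.smul_def, show (RatFunc.C : ℚ →+* RatFunc ℚ) = algebraMap ℚ (RatFunc ℚ) from Subsingleton.elim _ _]
  rw [hsum]
  have haev : aeval y (APoly l)
      = (y ^ 2 + y + 1) ^ (l - 1) * (2 * y + 1) * (y + 2) * (y - 1) := by
    simp only [APoly, map_mul, map_pow, map_add, map_sub, map_one, map_ofNat, aeval_X]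
  have hφA : φ (APoly l)
      = (x ^ 2 + x + 1) ^ (l - 1) * (2 * x + 1) * (x + 2) * (x - 1) := by
    simp only [APoly, map_mul, map_pow, map_add, map_sub, map_one, map_ofNat, hxdef]
  rw [haev, hφA]
  obtain ⟨k, rfl⟩ : ∃ k, l = k + 1 := ⟨l - 1, by omega⟩
  simp only [Nat.add_sub_cancel]
  have h1 : (y ^ 2 + y + 1) * (1 + x) ^ 2 = x ^ 2 + x + 1 := by
    rw [hy]; field_simp; ring
  have h2 : (2 * y + 1) * (1 + x) = 1 - x := by
    rw [hy]; field_simp; ring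
  have h3 : (y + 2) * (1 + x) = x + 2 := by
    rw [hy]; field_simp; ring
  have h4 : (y - 1) * (1 + x) = -(2 * x + 1) := by
    rw [hy]; field_simp; ring
  have h1k : (y ^ 2 + y + 1) ^ k * ((1 + x) ^ 2) ^ k = (x ^ 2 + x + 1) ^ k := by
    rw [← mul_pow, h1]
  have hee : (1 + x) ^ (2 * (k + 1) + 1) = ((1 + x) ^ 2) ^ k * (1 + x) ^ 3 := by
    rw [show 2 * (k + 1) + 1 = 2 * k + 3 by omega, pow_add, pow_mul]
  clear_value y
  rw [hee]
  calc (y ^ 2 + y + 1) ^ k * (2 * y + 1) * (y + 2) * (y - 1) * (((1 + x) ^ 2) ^ k * (1 + x) ^ 3)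
      = ((y ^ 2 + y + 1) ^ k * ((1 + x) ^ 2) ^ k) * ((2 * y + 1) * (1 + x)) * ((y + 2) * (1 + x))
          * ((y - 1) * (1 + x)) := by ring
    _ = (x ^ 2 + x + 1) ^ k * (2 * x + 1) * (x + 2) * (x - 1) := by
        rw [h1k, h2, h3, h4]; ring

lemma coeff_eq (l : ℕ) (hl : 0 < l) (m : ℕ) (hm : m < 2 * l + 2) :
    (APoly l).coeff m
      = ∑ r ∈ Finset.range (m + 1),
          (APoly l).coeff r * (-1) ^ r * ((2 * l + 1 - r).choose (m - r) : ℚ) := by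
  conv_lhs => rw [← key_poly l hl]
  rw [finset_sum_coeff]
  have hcoe : ∀ r ∈ Finset.range (2 * l + 2),
      (C ((APoly l).coeff r) * (-X) ^ r * (1 + X) ^ (2 * l + 1 - r)).coeff m
        = if r ≤ m then (APoly l).coeff r * (-1) ^ r * ((2 * l + 1 - r).choose (m - r) : ℚ)
          else 0 := by
    intro r hr
    have hC : (C ((APoly l).coeff r * (-1) ^ r) : ℚ[X]) = C ((APoly l).coeff r) * (-1) ^ r := by
      rw [map_mul, map_pow, map_neg, map_one]
    have hre : C ((APoly l).coeff r) * (-X) ^ r * (1 + X) ^ (2 * l + 1 - r)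
        = C ((APoly l).coeff r * (-1) ^ r) * ((1 + X) ^ (2 * l + 1 - r) * X ^ r) := by
      rw [hC]; ring
    rw [hre, coeff_C_mul, coeff_mul_X_pow']
    split_ifs with h
    · rw [coeff_one_add_X_pow]
    · exact mul_zero _
  rw [Finset.sum_congr rfl hcoe,
    ← Finset.sum_subset (Finset.range_subset_range.mpr (by omega : m + 1 ≤ 2 * l + 2))
      (fun r _ hr => if_neg (by simp only [Finset.mem_range] at hr; omega))]
  exact Finset.sum_congr rfl fun r hr =>
    if_pos (by simp only [Finset.mem_range] at hr; omega)

lemma sum_tri {M : Type*} [AddCommMonoid M] (n : ℕ) (F : ℕ → ℕ → M) :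
    ∑ r ∈ Finset.range (n + 1), ∑ s ∈ Finset.range (n - r + 1), F r (r + s)
      = ∑ m ∈ Finset.range (n + 1), ∑ r ∈ Finset.range (m + 1), F r m := by
  rw [Finset.sum_sigma', Finset.sum_sigma']
  refine Finset.sum_nbij' (fun p => ⟨p.1 + p.2, p.1⟩) (fun p => ⟨p.2, p.1 - p.2⟩) ?_ ?_ ?_ ?_ ?_
  · rintro ⟨r, s⟩ h
    simp only [Finset.mem_sigma, Finset.mem_range] at h ⊢; omega
  · rintro ⟨m, r⟩ h
    simp only [Finset.mem_sigma, Finset.mem_range] at h ⊢; omega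
  · rintro ⟨r, s⟩ h; simp
  · rintro ⟨m, r⟩ h
    simp only [Finset.mem_sigma, Finset.mem_range] at h
    simp only [Sigma.mk.inj_iff, heq_eq_eq]
    exact ⟨by omega, trivial⟩
  · rintro ⟨r, s⟩ h; simp

theorem stmt6 (l : ℕ) (hl : 0 < l) (e f : ℚ) :
    PP l e (e + 2 * l - f) = -PP l e f := by
  have step1 : PP l e (e + 2 * l - f)
      = ∑ r ∈ Finset.range (2 * l + 1 + 1), ∑ s ∈ Finset.range (2 * l + 1 - r + 1),
          (-(-1 : ℚ) ^ r * (APoly l).coeff r)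
            * ((2 * l + 1 - r).choose ((r + s) - r) : ℚ)
            * rf e (r + s) * rf (-f) (2 * l + 1 - (r + s)) := by
    unfold PP
    simp only [Rat.cast_id]
    refine Finset.sum_congr (by norm_num) fun r hr => ?_
    rw [Finset.mem_range] at hr
    have hr' : r ≤ 2 * l + 1 := by omega
    have hsgn : (-1 : ℚ) ^ (2 * l + 1 - r) = -(-1 : ℚ) ^ r := by
      rcases Nat.even_or_odd r with hpar | hpar
      · rw [hpar.neg_one_pow, (Nat.Odd.sub_even hr' ⟨l, by ring⟩ hpar).neg_one_pow]
      · rw [hpar.neg_one_pow, (Nat.Odd.sub_odd ⟨l, by ring⟩ hpar).neg_one_pow]; norm_num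
    have hrhs : ∀ s ∈ Finset.range (2 * l + 1 - r + 1),
        (-(-1 : ℚ) ^ r * (APoly l).coeff r) * ((2 * l + 1 - r).choose ((r + s) - r) : ℚ)
            * rf e (r + s) * rf (-f) (2 * l + 1 - (r + s))
          = (APoly l).coeff r * rf e r
            * ((-(-1 : ℚ) ^ r) * (((2 * l + 1 - r).choose s : ℚ) * rf (e + r) s
              * rf (-f) (2 * l + 1 - r - s))) := by
      intro s _
      rw [Nat.add_sub_cancel_left, rf_add, Nat.sub_sub]
      ring
    rw [Finset.sum_congr rfl hrhs, ← Finset.mul_sum, ← Finset.mul_sum]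
    rw [rf_neg (e + 2 * l - f) (2 * l + 1 - r),
      show e + 2 * l - f - ((2 * l + 1 - r : ℕ) : ℚ) + 1 = (e + r) + (-f) by
        rw [Nat.cast_sub hr']; push_cast; ring,
      rf_vandermonde (e + r) (-f) (2 * l + 1 - r), hsgn]
  have tri := sum_tri (2 * l + 1) (fun r' m => (-(-1 : ℚ) ^ r' * (APoly l).coeff r')
    * ((2 * l + 1 - r').choose (m - r') : ℚ) * rf e m * rf (-f) (2 * l + 1 - m))
  rw [step1, tri]
  unfold PP
  simp only [Rat.cast_id]
  rw [← Finset.sum_neg_distrib]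
  refine Finset.sum_congr (by norm_num) fun m hm => ?_
  rw [Finset.mem_range] at hm
  conv_rhs => rw [coeff_eq l hl m (by omega)]
  rw [Finset.sum_mul, Finset.sum_mul, ← Finset.sum_neg_distrib]
  exact Finset.sum_congr rfl fun r _ => by ring
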